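/- Let W ∈ L²(ℤ_p × ℤ_p), W_in ∈ L²(ℤ_p × ℤ_p), ξ ∈ L²(ℤ_p), and let φ : ℝ → ℝ be Lipschitz with constant L_φ and φ(0) = 0, with 0 < L_φ ‖W‖₂ < 1. For an input x ∈ L²(ℤ_p), let h(x) denote the unique solution in L²(ℤ_p) of h(u) = ∫_{ℤ_p} W(u,y) φ(h(y)) dμ(y) + ∫_{ℤ_p} W_in(u,y) x(y) dμ(y) + ξ(u). Then for all x₁, x₂ ∈ L²(ℤ_p), ‖h(x₁) − h(x₂)‖₂ ≤ (1 − L_φ ‖W‖₂)⁻¹ ‖W_in‖₂ ‖x₁ − x₂‖₂; in particular the hidden state depends continuously on the input x. -/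

import Mathlib

open MeasureTheory
open scoped NNReal ENNReal

noncomputable instance (p : ℕ) [Fact p.Prime] : MeasurableSpace ℤ_[p] := borel _
instance (p : ℕ) [Fact p.Prime] : BorelSpace ℤ_[p] := ⟨rfl⟩

/-- The normalized Haar measure on the compact additive group `ℤ_[p]`
(so that `padicHaar p Set.univ = 1`). -/
noncomputable def padicHaar (p : ℕ) [Fact p.Prime] : Measure ℤ_[p] :=
  Measure.addHaarMeasure (⊤ : TopologicalSpace.PositiveCompacts ℤ_[p])


section Helpers
variable {α : Type*} [MeasurableSpace α] {μ : Measure α} [SFinite μ]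

lemma memℒp_section (K : α × α → ℝ) (hK : MemLp K 2 (μ.prod μ)) :
    ∀ᵐ u ∂μ, MemLp (fun y => K (u, y)) 2 μ := by
  have h2 : (2 : ℝ≥0∞) ≠ 0 := by norm_num
  have h2' : (2 : ℝ≥0∞) ≠ ∞ := by norm_num
  have h1 := hK.1.prodMk_left
  obtain ⟨g', hg'm, hgg'⟩ := (hK.1.enorm.pow_const (2:ℝ) :
    AEMeasurable (fun z => (‖K z‖₊ : ℝ≥0∞) ^ (2:ℝ)) (μ.prod μ))
  have hfin : (∫⁻ u, ∫⁻ y, g' (u, y) ∂μ ∂μ) ≠ ⊤ := by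
    rw [← lintegral_prod _ hg'm.aemeasurable, ← lintegral_congr_ae hgg']
    have h := hK.2
    rw [eLpNorm_eq_lintegral_rpow_enorm_toReal h2 h2'] at h
    simp only [ENNReal.toReal_ofNat, one_div, enorm_eq_nnnorm] at h
    exact ((ENNReal.rpow_lt_top_iff_of_pos (by norm_num)).mp h).ne
  have h2f : ∀ᵐ u ∂μ, (∫⁻ y, g' (u, y) ∂μ) < ⊤ :=
    ae_lt_top hg'm.lintegral_prod_right' hfin
  filter_upwards [h1, h2f, Measure.ae_ae_of_ae_prod hgg'] with u hu1 hu2 hu3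
  refine ⟨hu1, ?_⟩
  rw [eLpNorm_eq_lintegral_rpow_enorm_toReal h2 h2']
  simp only [ENNReal.toReal_ofNat, one_div, enorm_eq_nnnorm]
  refine ENNReal.rpow_lt_top_of_nonneg (by norm_num) ?_
  rw [show (fun y => (‖K (u, y)‖₊ : ℝ≥0∞) ^ (2:ℝ)) = fun y => ‖K (u, y)‖ₑ ^ (2:ℝ) from rfl, lintegral_congr_ae hu3]
  exact hu2.ne


lemma hs_bound (K : α × α → ℝ) (f : α → ℝ)
    (hK : AEStronglyMeasurable K (μ.prod μ)) (hf : MemLp f 2 μ) :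
    eLpNorm (fun u => ∫ y, K (u, y) * f y ∂μ) 2 μ
      ≤ eLpNorm K 2 (μ.prod μ) * eLpNorm f 2 μ := by
  have h2 : (2 : ℝ≥0∞) ≠ 0 := by norm_num
  have h2' : (2 : ℝ≥0∞) ≠ ∞ := by norm_num
  rw [eLpNorm_eq_lintegral_rpow_enorm_toReal h2 h2', eLpNorm_eq_lintegral_rpow_enorm_toReal h2 h2',
    eLpNorm_eq_lintegral_rpow_enorm_toReal h2 h2']
  simp only [ENNReal.toReal_ofNat, one_div, enorm_eq_nnnorm]
  set Nf : ℝ≥0∞ := ∫⁻ y, (‖f y‖₊ : ℝ≥0∞) ^ (2:ℝ) ∂μ with hNf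
  have hconj : Real.HolderConjugate 2 2 := Real.HolderConjugate.two_two
  have hNfin : Nf ≠ ⊤ := by
    have h := hf.2
    rw [eLpNorm_eq_lintegral_rpow_enorm_toReal h2 h2'] at h
    simp only [ENNReal.toReal_ofNat, one_div, enorm_eq_nnnorm] at h
    exact ((ENNReal.rpow_lt_top_iff_of_pos (by norm_num)).mp h).ne
  have key : ∀ᵐ u ∂μ, (‖∫ y, K (u, y) * f y ∂μ‖₊ : ℝ≥0∞) ^ (2:ℝ)
      ≤ (∫⁻ y, (‖K (u, y)‖₊ : ℝ≥0∞) ^ (2:ℝ) ∂μ) * Nf := by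
    filter_upwards [hK.prodMk_left] with u hu
    have cs : (∫⁻ y, (‖K (u, y)‖₊ : ℝ≥0∞) * ‖f y‖₊ ∂μ)
        ≤ (∫⁻ y, (‖K (u, y)‖₊ : ℝ≥0∞) ^ (2:ℝ) ∂μ) ^ (1/(2:ℝ)) * Nf ^ (1/(2:ℝ)) :=
      ENNReal.lintegral_mul_le_Lp_mul_Lq μ hconj
        hu.enorm hf.1.enorm
    have h1 : (‖∫ y, K (u, y) * f y ∂μ‖₊ : ℝ≥0∞)
        ≤ ∫⁻ y, (‖K (u, y)‖₊ : ℝ≥0∞) * ‖f y‖₊ ∂μ := by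
      refine (enorm_integral_le_lintegral_enorm _).trans_eq ?_
      congr 1; funext y; simp [nnnorm_mul, ENNReal.coe_mul]; rfl
    calc (‖∫ y, K (u, y) * f y ∂μ‖₊ : ℝ≥0∞) ^ (2:ℝ)
        ≤ ((∫⁻ y, (‖K (u, y)‖₊ : ℝ≥0∞) ^ (2:ℝ) ∂μ) ^ (1/(2:ℝ)) * Nf ^ (1/(2:ℝ))) ^ (2:ℝ) := by
          exact ENNReal.rpow_le_rpow (h1.trans cs) (by norm_num)
      _ = (∫⁻ y, (‖K (u, y)‖₊ : ℝ≥0∞) ^ (2:ℝ) ∂μ) * Nf := by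
          rw [ENNReal.mul_rpow_of_nonneg _ _ (by norm_num), ← ENNReal.rpow_mul,
            ← ENNReal.rpow_mul]
          norm_num
  have step : (∫⁻ u, (‖∫ y, K (u, y) * f y ∂μ‖₊ : ℝ≥0∞) ^ (2:ℝ) ∂μ)
      ≤ (∫⁻ z, (‖K z‖₊ : ℝ≥0∞) ^ (2:ℝ) ∂(μ.prod μ)) * Nf := by
    calc (∫⁻ u, (‖∫ y, K (u, y) * f y ∂μ‖₊ : ℝ≥0∞) ^ (2:ℝ) ∂μ)
        ≤ ∫⁻ u, (∫⁻ y, (‖K (u, y)‖₊ : ℝ≥0∞) ^ (2:ℝ) ∂μ) * Nf ∂μ := lintegral_mono_ae key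
      _ = (∫⁻ u, ∫⁻ y, (‖K (u, y)‖₊ : ℝ≥0∞) ^ (2:ℝ) ∂μ ∂μ) * Nf := lintegral_mul_const' _ _ hNfin
      _ = (∫⁻ z, (‖K z‖₊ : ℝ≥0∞) ^ (2:ℝ) ∂(μ.prod μ)) * Nf := by
          rw [lintegral_prod (fun z => (‖K z‖₊ : ℝ≥0∞) ^ (2:ℝ)) (hK.enorm.pow_const _)]
  calc (∫⁻ u, (‖∫ y, K (u, y) * f y ∂μ‖₊ : ℝ≥0∞) ^ (2:ℝ) ∂μ) ^ (2:ℝ)⁻¹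
      ≤ ((∫⁻ z, (‖K z‖₊ : ℝ≥0∞) ^ (2:ℝ) ∂(μ.prod μ)) * Nf) ^ (2:ℝ)⁻¹ :=
        ENNReal.rpow_le_rpow step (by norm_num)
    _ = _ := by rw [ENNReal.mul_rpow_of_nonneg _ _ (by norm_num)]

end Helpers

set_option maxHeartbeats 1000000 in
/-- In the contraction regime, the hidden state depends
`(1 − Lφ‖W‖₂)⁻¹‖W_in‖₂`-Lipschitz-continuously on the input `x`. -/
theorem stmt_7 (p : ℕ) [Fact p.Prime]
    (W Win : ℤ_[p] × ℤ_[p] → ℝ) (ξ : ℤ_[p] → ℝ)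
    (hW : MemLp W 2 ((padicHaar p).prod (padicHaar p)))
    (hWin : MemLp Win 2 ((padicHaar p).prod (padicHaar p)))
    (hξ : MemLp ξ 2 (padicHaar p))
    (φ : ℝ → ℝ) (Lφ : ℝ≥0) (hφ : LipschitzWith Lφ φ) (hφ0 : φ 0 = 0)
    (hpos : 0 < (Lφ : ℝ≥0∞) * eLpNorm W 2 ((padicHaar p).prod (padicHaar p)))
    (hlt : (Lφ : ℝ≥0∞) * eLpNorm W 2 ((padicHaar p).prod (padicHaar p)) < 1)
    (x₁ x₂ : ℤ_[p] → ℝ) (hx₁ : MemLp x₁ 2 (padicHaar p)) (hx₂ : MemLp x₂ 2 (padicHaar p))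
    (h₁ h₂ : ℤ_[p] → ℝ) (hh₁ : MemLp h₁ 2 (padicHaar p)) (hh₂ : MemLp h₂ 2 (padicHaar p))
    (hfix₁ : ∀ᵐ u ∂(padicHaar p),
      h₁ u = ∫ y, W (u, y) * φ (h₁ y) ∂(padicHaar p)
          + ∫ y, Win (u, y) * x₁ y ∂(padicHaar p) + ξ u)
    (hfix₂ : ∀ᵐ u ∂(padicHaar p),
      h₂ u = ∫ y, W (u, y) * φ (h₂ y) ∂(padicHaar p)
          + ∫ y, Win (u, y) * x₂ y ∂(padicHaar p) + ξ u) :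
    eLpNorm (fun u => h₁ u - h₂ u) 2 (padicHaar p)
      ≤ (1 - (Lφ : ℝ≥0∞) * eLpNorm W 2 ((padicHaar p).prod (padicHaar p)))⁻¹
          * eLpNorm Win 2 ((padicHaar p).prod (padicHaar p))
          * eLpNorm (fun u => x₁ u - x₂ u) 2 (padicHaar p) := by
  set μ := padicHaar p with hμ
  haveI : IsFiniteMeasure μ := by rw [hμ]; unfold padicHaar; infer_instance
  have h2 : (2 : ℝ≥0∞) ≠ 0 := by norm_num
  have h2' : (2 : ℝ≥0∞) ≠ ∞ := by norm_num
  have hpqr : (1 : ℝ≥0∞) / 1 = 1 / 2 + 1 / 2 := by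
    rw [ENNReal.div_add_div_same, one_add_one_eq_two, ENNReal.div_self h2 h2', div_one]
  set A : ℝ≥0∞ := (Lφ : ℝ≥0∞) * eLpNorm W 2 (μ.prod μ) with hA
  set D : ℝ≥0∞ := eLpNorm (fun u => h₁ u - h₂ u) 2 μ with hD
  have hφ₁ : MemLp (fun y => φ (h₁ y)) 2 μ := hφ.comp_memLp hφ0 hh₁
  have hφ₂ : MemLp (fun y => φ (h₂ y)) 2 μ := hφ.comp_memLp hφ0 hh₂
  have hΔφ : MemLp (fun y => φ (h₁ y) - φ (h₂ y)) 2 μ := hφ₁.sub hφ₂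
  have hΔx : MemLp (fun y => x₁ y - x₂ y) 2 μ := hx₁.sub hx₂
  -- the two integral-operator terms
  set g₁ : ℤ_[p] → ℝ := fun u => ∫ y, W (u, y) * (φ (h₁ y) - φ (h₂ y)) ∂μ with hg₁
  set g₂ : ℤ_[p] → ℝ := fun u => ∫ y, Win (u, y) * (x₁ y - x₂ y) ∂μ with hg₂
  -- a.e. identity for the difference
  have hae : ∀ᵐ u ∂μ, h₁ u - h₂ u = g₁ u + g₂ u := by
    filter_upwards [hfix₁, hfix₂, memℒp_section W hW, memℒp_section Win hWin]
      with u e1 e2 hWu hWinu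
    have i1 : Integrable (fun y => W (u, y) * φ (h₁ y)) μ :=
      memLp_one_iff_integrable.mp
        (MemLp.smul (𝕜 := ℝ) (φ := fun y => W (u, y)) (f := fun y => φ (h₁ y)) hφ₁ hWu (r := 1))
    have i2 : Integrable (fun y => W (u, y) * φ (h₂ y)) μ :=
      memLp_one_iff_integrable.mp
        (MemLp.smul (𝕜 := ℝ) (φ := fun y => W (u, y)) (f := fun y => φ (h₂ y)) hφ₂ hWu (r := 1))
    have i3 : Integrable (fun y => Win (u, y) * x₁ y) μ :=
      memLp_one_iff_integrable.mp
        (MemLp.smul (𝕜 := ℝ) (φ := fun y => Win (u, y)) (f := x₁) hx₁ hWinu (r := 1))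
    have i4 : Integrable (fun y => Win (u, y) * x₂ y) μ :=
      memLp_one_iff_integrable.mp
        (MemLp.smul (𝕜 := ℝ) (φ := fun y => Win (u, y)) (f := x₂) hx₂ hWinu (r := 1))
    have e3 : g₁ u = (∫ y, W (u, y) * φ (h₁ y) ∂μ) - ∫ y, W (u, y) * φ (h₂ y) ∂μ := by
      rw [hg₁, ← integral_sub i1 i2]; simp [mul_sub]
    have e4 : g₂ u = (∫ y, Win (u, y) * x₁ y ∂μ) - ∫ y, Win (u, y) * x₂ y ∂μ := by
      rw [hg₂, ← integral_sub i3 i4]; simp [mul_sub]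
    rw [e1, e2, e3, e4]; ring
  -- measurability of the two terms
  have hmΔφ : AEStronglyMeasurable (fun z : ℤ_[p] × ℤ_[p] => W z * (φ (h₁ z.2) - φ (h₂ z.2)))
      (μ.prod μ) :=
    hW.1.mul (hΔφ.1.comp_quasiMeasurePreserving Measure.quasiMeasurePreserving_snd)
  have hmΔx : AEStronglyMeasurable (fun z : ℤ_[p] × ℤ_[p] => Win z * (x₁ z.2 - x₂ z.2))
      (μ.prod μ) :=
    hWin.1.mul (hΔx.1.comp_quasiMeasurePreserving Measure.quasiMeasurePreserving_snd)
  have hg₁m : AEStronglyMeasurable g₁ μ := hmΔφ.integral_prod_right'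
  have hg₂m : AEStronglyMeasurable g₂ μ := hmΔx.integral_prod_right'
  -- Lipschitz bound on Δφ
  have hlip : eLpNorm (fun y => φ (h₁ y) - φ (h₂ y)) 2 μ ≤ (Lφ : ℝ≥0∞) * D := by
    have := eLpNorm_le_nnreal_smul_eLpNorm_of_ae_le_mul (μ := μ)
      (f := fun y => φ (h₁ y) - φ (h₂ y)) (g := fun y => h₁ y - h₂ y) (c := Lφ)
      (Filter.Eventually.of_forall fun y => by
        have := hφ.dist_le_mul (h₁ y) (h₂ y)
        simpa [← NNReal.coe_le_coe, dist_eq_norm, coe_nnnorm] using this) 2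
    simpa [ENNReal.smul_def, smul_eq_mul] using this
  -- main estimate
  have hmain : D ≤ A * D + eLpNorm Win 2 (μ.prod μ) * eLpNorm (fun u => x₁ u - x₂ u) 2 μ := by
    calc D = eLpNorm (fun u => g₁ u + g₂ u) 2 μ := eLpNorm_congr_ae hae
      _ ≤ eLpNorm g₁ 2 μ + eLpNorm g₂ 2 μ := eLpNorm_add_le hg₁m hg₂m one_le_two
      _ ≤ eLpNorm W 2 (μ.prod μ) * eLpNorm (fun y => φ (h₁ y) - φ (h₂ y)) 2 μ
            + eLpNorm Win 2 (μ.prod μ) * eLpNorm (fun u => x₁ u - x₂ u) 2 μ := by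
          gcongr
          · exact hs_bound W _ hW.1 hΔφ
          · exact hs_bound Win _ hWin.1 hΔx
      _ ≤ A * D + eLpNorm Win 2 (μ.prod μ) * eLpNorm (fun u => x₁ u - x₂ u) 2 μ := by
          refine add_le_add ?_ le_rfl
          calc eLpNorm W 2 (μ.prod μ) * eLpNorm (fun y => φ (h₁ y) - φ (h₂ y)) 2 μ
              ≤ eLpNorm W 2 (μ.prod μ) * ((Lφ : ℝ≥0∞) * D) := by gcongr
            _ = A * D := by rw [hA]; ring
  -- conclude
  set B : ℝ≥0∞ := eLpNorm Win 2 (μ.prod μ) * eLpNorm (fun u => x₁ u - x₂ u) 2 μ with hB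
  have hDfin : D ≠ ⊤ := (hh₁.sub hh₂).eLpNorm_lt_top.ne
  have h1A : (1 : ℝ≥0∞) - A ≠ 0 := (tsub_pos_of_lt hlt).ne'
  have h1A' : (1 : ℝ≥0∞) - A ≠ ⊤ := (tsub_le_self.trans_lt ENNReal.one_lt_top).ne
  have hsub : ((1 : ℝ≥0∞) - A) * D ≤ B := by
    rw [ENNReal.sub_mul (fun _ _ => hDfin), one_mul]
    exact tsub_le_iff_right.mpr (by rwa [add_comm] at hmain)
  calc D = ((1 : ℝ≥0∞) - A)⁻¹ * (((1 : ℝ≥0∞) - A) * D) := by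
        rw [← mul_assoc, ENNReal.inv_mul_cancel h1A h1A', one_mul]
    _ ≤ ((1 : ℝ≥0∞) - A)⁻¹ * B := by gcongr
    _ = _ := by rw [hB, mul_assoc]
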